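/- Let n be a positive integer and k an integer with k ≥ 2. For the path graph P_n on n vertices, CV_k(P_n) = ⌊n/(k+1)⌋. -/

import Mathlib

open SimpleGraph

/-- A graph is in a *failure state* for `k` if every connected component has
diameter less than `k`, i.e. every pair of mutually reachable vertices is at
distance less than `k`. -/
def FailureState {V : Type*} (G : SimpleGraph V) (k : ℕ) : Prop :=
  ∀ u v : V, G.Reachable u v → G.dist u v < k

/-- `G` contains `m` pairwise vertex-disjoint paths of length `k`. -/
def HasDisjointPaths {V : Type*} (G : SimpleGraph V) (k m : ℕ) : Prop :=
  ∃ (u v : Fin m → V) (P : ∀ i, G.Walk (u i) (v i)),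
    (∀ i, (P i).IsPath ∧ (P i).length = k) ∧
    ∀ i j, i ≠ j → ∀ x, x ∈ (P i).support → x ∉ (P j).support

/-- The `k`-diameter component vertex connectivity: the minimum size of a set of
vertices whose deletion leaves every component with diameter less than `k`. -/
noncomputable def CV {V : Type*} (G : SimpleGraph V) (k : ℕ) : ℕ :=
  sInf {n | ∃ V' : Finset V, V'.card = n ∧
    FailureState (G.induce ((V' : Set V))ᶜ) k}

/-- The `k`-diameter component edge connectivity: the minimum size of a set of
edges whose deletion leaves every component with diameter less than `k`. -/
noncomputable def CE {V : Type*} (G : SimpleGraph V) (k : ℕ) : ℕ :=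
  sInf {n | ∃ E' : Finset (Sym2 V), (E' : Set (Sym2 V)) ⊆ G.edgeSet ∧ E'.card = n ∧
    FailureState (G.deleteEdges (E' : Set (Sym2 V))) k}

/-- The `k`-diameter component connectivity function: the minimum over all
`p`-element vertex sets `V'` of `CE k (G - V')`. -/
noncomputable def CM {V : Type*} (G : SimpleGraph V) (k p : ℕ) : ℕ :=
  sInf {q | ∃ V' : Finset V, V'.card = p ∧
    CE (G.induce ((V' : Set V))ᶜ) k = q}

section CVaux
variable {n : ℕ} {s : Set (Fin n)}

lemma path_induce_adj {u v : ↥s} (h : ((pathGraph n).induce s).Adj u v) :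
    (u : Fin n).val + 1 = (v : Fin n).val ∨ (v : Fin n).val + 1 = (u : Fin n).val := by
  simpa [pathGraph_adj] using h

lemma walk_ivt {u v : ↥s} (w : ((pathGraph n).induce s).Walk u v) :
    ∀ c : ℕ, ((u:Fin n).val ≤ c ∧ c ≤ (v:Fin n).val) ∨ ((v:Fin n).val ≤ c ∧ c ≤ (u:Fin n).val) →
    ∃ x ∈ w.support, (x : Fin n).val = c := by
  induction w with
  | @nil z =>
    intro c h1
    exact ⟨z, by simp, by omega⟩
  | @cons a b v h p ih =>
    intro c h1
    by_cases hc : c = (a : Fin n).val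
    · exact ⟨a, by simp, hc.symm⟩
    · have hadj := path_induce_adj h
      obtain ⟨x, hx, hxv⟩ := ih c (by omega)
      exact ⟨x, by simp [hx], hxv⟩

lemma walk_len_ge {u v : ↥s} (w : ((pathGraph n).induce s).Walk u v) :
    (v:Fin n).val ≤ (u:Fin n).val + w.length ∧ (u:Fin n).val ≤ (v:Fin n).val + w.length := by
  induction w with
  | nil => simp
  | @cons a b v h p ih =>
    have hadj := path_induce_adj h
    simp only [SimpleGraph.Walk.length_cons]
    omega

lemma straight_walk :
    ∀ (d : ℕ) (u v : ↥s), (v:Fin n).val = (u:Fin n).val + d →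
    (∀ c : Fin n, (u:Fin n).val ≤ c.val → c.val ≤ (v:Fin n).val → c ∈ s) →
    ∃ w : ((pathGraph n).induce s).Walk u v, w.length = d := by
  intro d
  induction d with
  | zero =>
    intro u v hv _
    have : u = v := Subtype.ext (Fin.ext (by omega))
    subst this
    exact ⟨.nil, rfl⟩
  | succ d ih =>
    intro u v hv hall
    have hlt : (u:Fin n).val + 1 < n := by have := (v:Fin n).isLt; omega
    have hu1 : (⟨(u:Fin n).val + 1, hlt⟩ : Fin n) ∈ s := hall _ (by simp) (by show (u:Fin n).val + 1 ≤ (v:Fin n).val; omega)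
    have hadj : ((pathGraph n).induce s).Adj u ⟨⟨(u:Fin n).val + 1, hlt⟩, hu1⟩ := by
      simp [pathGraph_adj]
    obtain ⟨w, hw⟩ := ih ⟨⟨(u:Fin n).val + 1, hlt⟩, hu1⟩ v (by simp; omega)
      (fun c h1 h2 => hall c (by simp at h1; omega) h2)
    exact ⟨.cons hadj w, by simp [hw]⟩

lemma failure_of_sep {k : ℕ} (hk : 1 ≤ k)
    (h : ∀ a b : ℕ, a + k ≤ b → b < n → ∃ c : Fin n, a ≤ c.val ∧ c.val ≤ b ∧ c ∉ s) :
    FailureState ((pathGraph n).induce s) k := by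
  suffices key : ∀ u v : ↥s, (u:Fin n).val ≤ (v:Fin n).val →
      ((pathGraph n).induce s).Reachable u v → ((pathGraph n).induce s).dist u v < k by
    intro u v hr
    rcases le_total (u:Fin n).val (v:Fin n).val with huv | huv
    · exact key u v huv hr
    · rw [SimpleGraph.dist_comm]; exact key v u huv hr.symm
  intro u v huv hr
  obtain ⟨w⟩ := hr
  have hall : ∀ c : Fin n, (u:Fin n).val ≤ c.val → c.val ≤ (v:Fin n).val → c ∈ s := by
    intro c h1 h2
    obtain ⟨x, hx, hxv⟩ := walk_ivt w c.val (Or.inl ⟨h1, h2⟩)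
    have : c = ↑x := Fin.ext hxv.symm
    rw [this]; exact x.2
  have hlt : (v:Fin n).val < (u:Fin n).val + k := by
    by_contra hcon
    push_neg at hcon
    obtain ⟨c, hc1, hc2, hc3⟩ := h (u:Fin n).val (v:Fin n).val (by omega) (v:Fin n).isLt
    exact hc3 (hall c hc1 hc2)
  obtain ⟨w2, hw2⟩ := straight_walk ((v:Fin n).val - (u:Fin n).val) u v (by omega) hall
  have := SimpleGraph.dist_le w2
  omega

end CVaux

lemma arith_block {n k u v : ℕ} (hv : v < n) (hge : u + k ≤ v) :
    ∃ t, t < n / (k+1) ∧ u ≤ (k+1)*t + k ∧ (k+1)*t + k ≤ v := by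
  obtain ⟨q, r, hqr, hr⟩ : ∃ q r, u = (k+1)*q + r ∧ r < k+1 :=
    ⟨u/(k+1), u % (k+1), (Nat.div_add_mod u (k+1)).symm, Nat.mod_lt _ (by omega)⟩
  have hexp : (q+1)*(k+1) = (k+1)*q + (k+1) := by ring
  have hq : q + 1 ≤ n / (k+1) := by
    rw [Nat.le_div_iff_mul_le (by omega : 0 < k+1), hexp]
    set M := (k+1)*q
    omega
  refine ⟨q, by omega, ?_, ?_⟩ <;> · set M := (k+1)*q; omega

lemma block_lt {n k t : ℕ} (ht : t < n/(k+1)) : (k+1)*t + k < n := by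
  have h1 : (t+1)*(k+1) ≤ (n/(k+1))*(k+1) := Nat.mul_le_mul_right _ (by omega)
  have h2 : (n/(k+1))*(k+1) ≤ n := Nat.div_mul_le_self n (k+1)
  nlinarith

lemma block_inj {k a b x : ℕ} (h1 : (k+1)*a ≤ x) (h2 : x ≤ (k+1)*a + k)
    (h3 : (k+1)*b ≤ x) (h4 : x ≤ (k+1)*b + k) : a = b := by
  rcases lt_trichotomy a b with h | h | h
  · exfalso
    have hm : (k+1)*(a+1) ≤ (k+1)*b := Nat.mul_le_mul_left _ (by omega)
    nlinarith
  · exact h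
  · exfalso
    have hm : (k+1)*(b+1) ≤ (k+1)*a := Nat.mul_le_mul_left _ (by omega)
    nlinarith

theorem CV_pathGraph_aux (n k : ℕ) (hn : 0 < n) (hk : 2 ≤ k) :
    sInf {q | ∃ V' : Finset (Fin n), V'.card = q ∧
      FailureState ((pathGraph n).induce ((V' : Set (Fin n)))ᶜ) k} = n / (k + 1) := by
  set m := n / (k + 1) with hm
  -- the deleted set for the upper bound
  have hmem : m ∈ {q | ∃ V' : Finset (Fin n), V'.card = q ∧
      FailureState ((pathGraph n).induce ((V' : Set (Fin n)))ᶜ) k} := by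
    classical
    set f : Fin m → Fin n := fun t => ⟨(k+1)*t.val + k, block_lt t.isLt⟩ with hf
    have hfinj : Function.Injective f := by
      intro a b hab
      have h1 : (k+1)*a.val + k = (k+1)*b.val + k := congrArg Fin.val hab
      have h2 : (k+1)*a.val = (k+1)*b.val := Nat.add_right_cancel h1
      exact Fin.ext (Nat.eq_of_mul_eq_mul_left (by omega) h2)
    refine ⟨Finset.univ.image f, ?_, ?_⟩
    · rw [Finset.card_image_of_injective _ hfinj, Finset.card_univ, Fintype.card_fin]
    · apply failure_of_sep (by omega)
      intro a b hab hbn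
      obtain ⟨t, ht, ht1, ht2⟩ := arith_block hbn hab
      refine ⟨f ⟨t, ht⟩, ht1, ht2, ?_⟩
      simp only [Set.mem_compl_iff, Finset.coe_image, Set.mem_image, not_not,
        Finset.coe_univ, Set.image_univ, Set.mem_range, not_forall, not_exists]
      exact ⟨⟨t, ht⟩, rfl⟩
  have hlb : ∀ q ∈ {q | ∃ V' : Finset (Fin n), V'.card = q ∧
      FailureState ((pathGraph n).induce ((V' : Set (Fin n)))ᶜ) k}, m ≤ q := by
    rintro q ⟨V', hcard, hfail⟩
    subst hcard
    have hblock : ∀ t : Fin m, ∃ x, x ∈ V' ∧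
        (k+1)*t.val ≤ x.val ∧ x.val ≤ (k+1)*t.val + k := by
      intro t
      by_contra hcon
      push_neg at hcon
      set a := (k+1)*t.val with ha
      have hak : a + k < n := block_lt t.isLt
      have hins : ∀ c : Fin n, a ≤ c.val → c.val ≤ a + k →
          c ∈ ((V' : Set (Fin n)))ᶜ := by
        intro c h1 h2 hc
        have := hcon c hc h1
        omega
      refine absurd (hfail ⟨⟨a, by omega⟩, hins _ le_rfl (by simp)⟩
        ⟨⟨a + k, by omega⟩, hins _ (by simp) le_rfl⟩ ?_) ?_
      · obtain ⟨w, hw⟩ := straight_walk k ⟨⟨a, by omega⟩, hins _ le_rfl (by simp)⟩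
          ⟨⟨a + k, by omega⟩, hins _ (by simp) le_rfl⟩ rfl (fun c h1 h2 => hins c h1 h2)
        exact ⟨w⟩
      · intro hd
        have hr : ((pathGraph n).induce ((V' : Set (Fin n)))ᶜ).Reachable
            ⟨⟨a, by omega⟩, hins _ le_rfl (by simp)⟩
            ⟨⟨a + k, by omega⟩, hins _ (by simp) le_rfl⟩ := by
          obtain ⟨w, hw⟩ := straight_walk k ⟨⟨a, by omega⟩, hins _ le_rfl (by simp)⟩
            ⟨⟨a + k, by omega⟩, hins _ (by simp) le_rfl⟩ rfl (fun c h1 h2 => hins c h1 h2)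
          exact ⟨w⟩
        obtain ⟨w2, hw2⟩ := hr.exists_walk_length_eq_dist
        have hlen := (walk_len_ge w2).1
        simp only at hlen
        omega
    choose g hg1 hg2 hg3 using hblock
    have : (Finset.univ : Finset (Fin m)).card ≤ V'.card := by
      apply Finset.card_le_card_of_injOn g (fun t _ => hg1 t)
      intro a _ b _ hab
      exact Fin.ext (block_inj (hg2 a) (hg3 a) (hab ▸ hg2 b) (hab ▸ hg3 b))
    simpa using this
  exact le_antisymm (Nat.sInf_le hmem) (le_csInf ⟨m, hmem⟩ hlb)


theorem CV_pathGraph (n k : ℕ) (hn : 0 < n) (hk : 2 ≤ k) :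
    CV (SimpleGraph.pathGraph n) k = n / (k + 1) := by
  exact CV_pathGraph_aux n k hn hk
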